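/- Let n be a positive integer, let f : ℝ^n → ℝ^n be a topical function, let λ ∈ ℝ, and let i = i_1 → i_2 → ⋯ → i_k = j be a directed path in the associated graph G(f). For each edge p → q of G(f) define h_{qp} : ℝ ∪ {−∞} → ℝ ∪ {−∞} by h_{qp}(t) = sup{u ∈ ℝ : f_p(u·e_{{q}}) ≤ t} for t ∈ ℝ (this supremum is either a real number or −∞, the latter by the convention sup ∅ = −∞, since the edge condition makes the set bounded above) and h_{qp}(−∞) = −∞; set h^λ_{qp}(t) = h_{qp}(λ + t). Then for every x ∈ ℝ^n with f(x) ≤ x + λ·𝟙 and x ≥ 0, one has x_j ≤ h^λ_{i_k i_{k−1}} ∘ ⋯ ∘ h^λ_{i_2 i_1}(x_i), the inequality holding in ℝ ∪ {−∞}. -/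

import Mathlib

/-- The characteristic vector of the singleton `{j}`. -/
def eSingle {n : ℕ} (j : Fin n) : Fin n → ℝ := fun k => if k = j then 1 else 0

/-- Edge `i → j` in the graph `G(f)` associated to a topical function `f`:
the monotone function `u ↦ f_i(u·e_{{j}})` is unbounded above. -/
def GraphEdge {n : ℕ} (f : (Fin n → ℝ) → (Fin n → ℝ)) (i j : Fin n) : Prop :=
  ∀ M : ℝ, ∃ u : ℝ, M ≤ f (u • eSingle j) i

/-- `h_{qp} : ℝ ∪ {−∞} → ℝ ∪ {−∞}` (embedded in `EReal`),
`h_{qp}(t) = sup { u ∈ ℝ | f_p(u·e_{{q}}) ≤ t }`, with `sup ∅ = −∞`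
(so in particular `h_{qp}(−∞) = −∞`). -/
noncomputable def hFun {n : ℕ} (f : (Fin n → ℝ) → (Fin n → ℝ)) (q p : Fin n)
    (t : EReal) : EReal :=
  sSup {w : EReal | ∃ u : ℝ, w = (u : EReal) ∧ ((f (u • eSingle q) p : ℝ) : EReal) ≤ t}

/-- The composition `h^λ_{p(m) p(m-1)} ∘ ⋯ ∘ h^λ_{p(1) p(0)}` along a path `p`,
where `h^λ_{qp}(t) = h_{qp}(λ + t)`. -/
noncomputable def pathBound {n : ℕ} (f : (Fin n → ℝ) → (Fin n → ℝ)) (lam : ℝ)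
    (p : ℕ → Fin n) : ℕ → EReal → EReal
  | 0, t => t
  | m + 1, t => hFun f (p (m + 1)) (p m) ((lam : EReal) + pathBound f lam p m t)

theorem path_bound_on_super_eigenspace
    (n : ℕ) (hn : 0 < n) (f : (Fin n → ℝ) → (Fin n → ℝ))
    (htop : ∀ (x : Fin n → ℝ) (h : ℝ), f (fun i => x i + h) = fun i => f x i + h)
    (hmono : Monotone f)
    (lam : ℝ) (m : ℕ) (p : ℕ → Fin n)
    (hpath : ∀ t, t < m → GraphEdge f (p t) (p (t + 1)))
    (x : Fin n → ℝ)
    (hxl : ∀ i, f x i ≤ x i + lam) (hx0 : ∀ i, 0 ≤ x i) :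
    ((x (p m) : ℝ) : EReal) ≤ pathBound f lam p m ((x (p 0) : ℝ) : EReal) := by
  induction m with
  | zero => exact le_refl _
  | succ m ih =>
    have hmem : ((x (p (m+1)) : ℝ) : EReal) ∈
        {w : EReal | ∃ u : ℝ, w = (u : EReal) ∧
          ((f (u • eSingle (p (m+1))) (p m) : ℝ) : EReal) ≤ (lam : EReal) + ((x (p m) : ℝ) : EReal)} := by
      refine ⟨x (p (m+1)), rfl, ?_⟩
      have hle : (x (p (m+1))) • eSingle (p (m+1)) ≤ x := by
        intro k
        simp only [eSingle, Pi.smul_apply, smul_eq_mul]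
        by_cases hk : k = p (m+1)
        · simp [hk]
        · simp [hk, hx0 k]
      have h1 : f ((x (p (m+1))) • eSingle (p (m+1))) (p m) ≤ x (p m) + lam :=
        le_trans (hmono hle (p m)) (hxl (p m))
      have : ((f ((x (p (m+1))) • eSingle (p (m+1))) (p m) : ℝ) : EReal) ≤ ((x (p m) + lam : ℝ) : EReal) :=
        EReal.coe_le_coe_iff.mpr h1
      calc ((f ((x (p (m+1))) • eSingle (p (m+1))) (p m) : ℝ) : EReal)
          ≤ ((x (p m) + lam : ℝ) : EReal) := this
        _ = (lam : EReal) + ((x (p m) : ℝ) : EReal) := by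
            rw [EReal.coe_add, add_comm]
    have step1 : ((x (p (m+1)) : ℝ) : EReal) ≤
        hFun f (p (m+1)) (p m) ((lam : EReal) + ((x (p m) : ℝ) : EReal)) :=
      le_sSup hmem
    have hmonot : hFun f (p (m+1)) (p m) ((lam : EReal) + ((x (p m) : ℝ) : EReal)) ≤
        hFun f (p (m+1)) (p m) ((lam : EReal) + pathBound f lam p m ((x (p 0) : ℝ) : EReal)) := by
      apply sSup_le_sSup
      rintro w ⟨u, rfl, hu⟩
      refine ⟨u, rfl, le_trans hu ?_⟩
      exact add_le_add_right (ih (fun t ht => hpath t (Nat.lt_succ_of_lt ht))) _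
    exact le_trans step1 hmonot
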